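/- arXiv:1601.02481 — 3 statements merged into one kernel-verified Lean document; each statement's English description precedes it below -/
import Mathlib

section
/- Suppose y: 2^V → ℝ≥0 satisfies ∑_{S∈𝕊} y_S ≤ f(𝕊) for every family 𝕊 of subsets of V, where f(𝕊) = ∑_{(i,j): 𝕊 separates (i,j)} π_{ij}. If the constraints corresponding to families 𝕊₁ and 𝕊₂ are both tight (hold with equality), then the constraint for 𝕊₁ ∪ 𝕊₂ is also tight. -/
open Finset

/-- `S` separates the pair `(i, j)` if it contains exactly one of `i`, `j`. -/
def SepSet {V : Type*} (S : Finset V) (i j : V) : Prop :=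
  (i ∈ S ∧ j ∉ S) ∨ (i ∉ S ∧ j ∈ S)

/-- A family `𝕊` of subsets separates `(i, j)` if some member of `𝕊` does. -/
def SepFam {V : Type*} (𝕊 : Finset (Finset V)) (i j : V) : Prop :=
  ∃ S ∈ 𝕊, SepSet S i j

instance {V : Type*} [DecidableEq V] (S : Finset V) (i j : V) :
    Decidable (SepSet S i j) := by unfold SepSet; infer_instance

instance {V : Type*} [DecidableEq V] (𝕊 : Finset (Finset V)) (i j : V) :
    Decidable (SepFam 𝕊 i j) := by unfold SepFam; infer_instance

/-- The coverage function `f(𝕊) = ∑_{(i,j) : 𝕊 separates (i,j)} π_{ij}`. -/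
def coverF {V : Type*} [Fintype V] [DecidableEq V] (π : V → V → ℝ)
    (𝕊 : Finset (Finset V)) : ℝ :=
  ∑ i : V, ∑ j : V, if SepFam 𝕊 i j then π i j else 0

/-- if `y` is feasible for the constraints `∑_{S ∈ 𝕊} y_S ≤ f(𝕊)` and
the constraints for families `𝕊₁` and `𝕊₂` are tight, then the constraint for
`𝕊₁ ∪ 𝕊₂` is also tight. -/
theorem union_of_tight_families_tight {V : Type*} [Fintype V] [DecidableEq V]
    (π : V → V → ℝ) (hπ : ∀ i j, 0 ≤ π i j) (hsymm : ∀ i j, π i j = π j i)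
    (y : Finset V → ℝ) (hy : ∀ S, 0 ≤ y S)
    (hfeas : ∀ 𝕊 : Finset (Finset V), ∑ S ∈ 𝕊, y S ≤ coverF π 𝕊)
    (𝕊₁ 𝕊₂ : Finset (Finset V))
    (ht1 : ∑ S ∈ 𝕊₁, y S = coverF π 𝕊₁)
    (ht2 : ∑ S ∈ 𝕊₂, y S = coverF π 𝕊₂) :
    ∑ S ∈ 𝕊₁ ∪ 𝕊₂, y S = coverF π (𝕊₁ ∪ 𝕊₂) := by
  have hsub : coverF π (𝕊₁ ∪ 𝕊₂) + coverF π (𝕊₁ ∩ 𝕊₂) ≤ coverF π 𝕊₁ + coverF π 𝕊₂ := by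
    unfold coverF
    rw [← Finset.sum_add_distrib, ← Finset.sum_add_distrib]
    apply Finset.sum_le_sum
    intro i _
    rw [← Finset.sum_add_distrib, ← Finset.sum_add_distrib]
    apply Finset.sum_le_sum
    intro j _
    have hU : SepFam (𝕊₁ ∪ 𝕊₂) i j ↔ SepFam 𝕊₁ i j ∨ SepFam 𝕊₂ i j := by
      constructor
      · rintro ⟨S, hS, hsep⟩
        rcases Finset.mem_union.1 hS with h | h
        · exact Or.inl ⟨S, h, hsep⟩
        · exact Or.inr ⟨S, h, hsep⟩
      · rintro (⟨S, h, hsep⟩ | ⟨S, h, hsep⟩)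
        · exact ⟨S, Finset.mem_union_left _ h, hsep⟩
        · exact ⟨S, Finset.mem_union_right _ h, hsep⟩
    have hI : SepFam (𝕊₁ ∩ 𝕊₂) i j → SepFam 𝕊₁ i j ∧ SepFam 𝕊₂ i j := by
      rintro ⟨S, hS, hsep⟩
      rcases Finset.mem_inter.1 hS with ⟨h1, h2⟩
      exact ⟨⟨S, h1, hsep⟩, ⟨S, h2, hsep⟩⟩
    have hp := hπ i j
    by_cases h1 : SepFam 𝕊₁ i j <;> by_cases h2 : SepFam 𝕊₂ i j <;>
      by_cases hI' : SepFam (𝕊₁ ∩ 𝕊₂) i j <;>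
      simp_all <;> linarith
  have hsum : ∑ S ∈ 𝕊₁ ∪ 𝕊₂, y S + ∑ S ∈ 𝕊₁ ∩ 𝕊₂, y S = ∑ S ∈ 𝕊₁, y S + ∑ S ∈ 𝕊₂, y S :=
    Finset.sum_union_inter
  have hU := hfeas (𝕊₁ ∪ 𝕊₂)
  have hI := hfeas (𝕊₁ ∩ 𝕊₂)
  linarith
end

section
/- By Farkas' lemma: given nonnegative reals y_S for S ⊆ V and penalties π_{ij} ≥ 0, there exist nonnegative y_{S,ij} (defined when S separates (i,j)) with ∑_{(i,j): S⊙(i,j)} y_{S,ij} ≥ y_S for all S and ∑_{S: S⊙(i,j)} y_{S,ij} ≤ π_{ij} for all pairs (i,j), if and only if for every function α: 2^V → ℝ≥0 one has ∑_{S} α_S · y_S ≤ ∑_{(i,j)} (max_{S: S⊙(i,j)} α_S) · π_{ij}. -/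
open Finset

/-- `max_{S : S ⊙ (i,j)} α_S`, with the maximum over the empty set taken to be `0`. -/
noncomputable def maxSep {V : Type*} [Fintype V] [DecidableEq V] (α : Finset V → ℝ) (i j : V) : ℝ :=
  (insert (0 : ℝ) ((Finset.univ.filter (fun S : Finset V => SepSet S i j)).image α)).max'
    (Finset.insert_nonempty _ _)

set_option linter.unusedSectionVars false
set_option linter.unusedVariables false

section ConeClosed

variable {κ : Type*} [Fintype κ] {E : Type*} [NormedAddCommGroup E] [NormedSpace ℝ E]


lemma cone_reduce (v : κ → E) (m : ℕ) :
    ∀ (t : Finset κ) (c : κ → ℝ), t.card ≤ m → (∀ k, 0 ≤ c k) → (∀ k ∉ t, c k = 0) →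
    ∃ (t' : Finset κ) (c' : κ → ℝ), LinearIndependent ℝ (fun k : t' => v k) ∧
      (∀ k, 0 ≤ c' k) ∧ (∀ k ∉ t', c' k = 0) ∧ ∑ k, c' k • v k = ∑ k, c k • v k := by
  classical
  induction m with
  | zero =>
    intro t c hcard h0 hsupp
    have ht : t = ∅ := Finset.card_eq_zero.mp (Nat.le_zero.mp hcard)
    subst ht
    haveI : IsEmpty ((∅ : Finset κ) : Type _) := by
      exact ⟨fun x => Finset.notMem_empty _ x.2⟩
    exact ⟨∅, c, linearIndependent_empty_type, h0, hsupp, rfl⟩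
  | succ m ih =>
    intro t c hcard h0 hsupp
    by_cases hli : LinearIndependent ℝ (fun k : t => v k)
    · exact ⟨t, c, hli, h0, hsupp, rfl⟩
    · obtain ⟨g, hgsum, k₀, hk₀⟩ := Fintype.not_linearIndependent_iff.mp hli
      set d : κ → ℝ := fun k => if h : k ∈ t then g ⟨k, h⟩ else 0 with hd
      have hdsum : ∑ k, d k • v k = 0 := by
        rw [← Finset.sum_subset (Finset.subset_univ t)
          (fun k _ hk => by simp [hd, dif_neg hk])]
        rw [← Finset.sum_attach t (fun k => d k • v k)]
        rw [← hgsum]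
        exact Finset.sum_congr rfl fun k _ => by simp [hd, k.2]
      have hdk₀ : d (k₀ : κ) ≠ 0 := by simpa [hd, k₀.2] using hk₀
      -- replace d by d₁ having a positive value on t
      set d₁ : κ → ℝ := if 0 < d (k₀ : κ) then d else -d with hd₁
      have hd₁sum : ∑ k, d₁ k • v k = 0 := by
        by_cases hpos : 0 < d (k₀ : κ)
        · simpa [hd₁, hpos] using hdsum
        · simp only [hd₁, if_neg hpos]
          have : ∑ k, (-d) k • v k = -∑ k, d k • v k := by
            simp [neg_smul, Finset.sum_neg_distrib]
          rw [this, hdsum, neg_zero]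
      have hd₁zero : ∀ k ∉ t, d₁ k = 0 := by
        intro k hk
        have : d k = 0 := by simp [hd, dif_neg hk]
        by_cases hpos : 0 < d (k₀ : κ) <;> simp [hd₁, hpos, this]
      have hd₁pos : 0 < d₁ (k₀ : κ) := by
        by_cases hpos : 0 < d (k₀ : κ)
        · simpa [hd₁, hpos] using hpos
        · simp only [hd₁, if_neg hpos]
          have := lt_of_le_of_ne (not_lt.mp hpos) hdk₀
          simpa using this
      set P : Finset κ := t.filter (fun k => 0 < d₁ k) with hP
      have hPne : P.Nonempty := ⟨k₀, Finset.mem_filter.mpr ⟨k₀.2, hd₁pos⟩⟩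
      obtain ⟨k₁, hk₁P, hk₁min⟩ := Finset.exists_min_image P (fun k => c k / d₁ k) hPne
      have hk₁t : (k₁ : κ) ∈ t := (Finset.mem_filter.mp hk₁P).1
      have hk₁pos : 0 < d₁ k₁ := (Finset.mem_filter.mp hk₁P).2
      set r : ℝ := c k₁ / d₁ k₁ with hr
      have hr0 : 0 ≤ r := div_nonneg (h0 _) hk₁pos.le
      set c' : κ → ℝ := fun k => c k - r * d₁ k with hc'
      have hc'0 : ∀ k, 0 ≤ c' k := by
        intro k
        by_cases hk : k ∈ t ∧ 0 < d₁ k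
        · have hle : r ≤ c k / d₁ k := hk₁min k (Finset.mem_filter.mpr ⟨hk.1, hk.2⟩)
          have := (le_div_iff₀ hk.2).mp hle
          simp only [hc']; linarith
        · have hdk : d₁ k ≤ 0 := by
            by_cases hkt : k ∈ t
            · rcases not_and.mp hk hkt with h
              exact not_lt.mp h
            · exact (hd₁zero k hkt).le
          have : r * d₁ k ≤ 0 := mul_nonpos_of_nonneg_of_nonpos hr0 hdk
          simp only [hc']; linarith [h0 k]
      have hc'supp : ∀ k ∉ t.erase k₁, c' k = 0 := by
        intro k hk

        by_cases hkt : k ∈ t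
        · have hkk₁ : k = (k₁ : κ) := by
            by_contra hne
            exact hk (Finset.mem_erase.mpr ⟨hne, hkt⟩)
          subst hkk₁
          simp only [hc', hr]
          field_simp
          simp
        · simp [hc', hsupp k hkt, hd₁zero k hkt]
      have hc'sum : ∑ k, c' k • v k = ∑ k, c k • v k := by
        simp only [hc', sub_smul, Finset.sum_sub_distrib, mul_smul]
        rw [← Finset.smul_sum, hd₁sum, smul_zero, sub_zero]
      have hcard' : (t.erase k₁).card ≤ m := by
        have := Finset.card_erase_of_mem hk₁t
        omega
      obtain ⟨t', c'', h1, h2, h3, h4⟩ := ih (t.erase k₁) c' hcard' hc'0 hc'supp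
      exact ⟨t', c'', h1, h2, h3, h4.trans hc'sum⟩


lemma isClosed_coneSet [FiniteDimensional ℝ E] (v : κ → E) :
    IsClosed {x : E | ∃ c : κ → ℝ, (∀ k, 0 ≤ c k) ∧ ∑ k, c k • v k = x} := by
  classical
  have hrepr : {x : E | ∃ c : κ → ℝ, (∀ k, 0 ≤ c k) ∧ ∑ k, c k • v k = x} =
      ⋃ t : Finset κ, {x | LinearIndependent ℝ (fun k : t => v k) ∧
        ∃ c : κ → ℝ, (∀ k, 0 ≤ c k) ∧ (∀ k ∉ t, c k = 0) ∧ ∑ k, c k • v k = x} := by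
    ext x
    simp only [Set.mem_setOf_eq, Set.mem_iUnion]
    constructor
    · rintro ⟨c, h0, rfl⟩
      obtain ⟨t', c', hli, h0', hsupp', hsum'⟩ :=
        cone_reduce v (univ : Finset κ).card univ c (le_refl _) h0 (by simp)
      exact ⟨t', hli, c', h0', hsupp', hsum'⟩
    · rintro ⟨t, _, c, h0, _, hsum⟩
      exact ⟨c, h0, hsum⟩
  rw [hrepr]
  apply isClosed_iUnion_of_finite
  intro t
  by_cases hli : LinearIndependent ℝ (fun k : t => v k)
  · have himg : {x : E | LinearIndependent ℝ (fun k : t => v k) ∧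
        ∃ c : κ → ℝ, (∀ k, 0 ≤ c k) ∧ (∀ k ∉ t, c k = 0) ∧ ∑ k, c k • v k = x} =
        (Fintype.linearCombination ℝ (fun k : t => v k)) '' {c : t → ℝ | ∀ k, 0 ≤ c k} := by
      ext x
      simp only [Set.mem_setOf_eq, Set.mem_image]
      constructor
      · rintro ⟨-, c, h0, hsupp, rfl⟩
        refine ⟨fun k => c k, fun k => h0 k, ?_⟩
        rw [Fintype.linearCombination_apply]
        rw [Finset.sum_coe_sort t (fun k => c k • v k)]
        exact Finset.sum_subset (Finset.subset_univ t)
          (fun k _ hk => by rw [hsupp k hk, zero_smul])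
      · rintro ⟨c, h0, rfl⟩
        refine ⟨hli, fun k => if h : k ∈ t then c ⟨k, h⟩ else 0, ?_, ?_, ?_⟩
        · intro k; by_cases h : k ∈ t <;> simp [h, h0]
        · intro k hk; simp [dif_neg hk]
        · rw [Fintype.linearCombination_apply]
          rw [← Finset.sum_subset (Finset.subset_univ t)
            (fun k _ hk => by simp [dif_neg hk])]
          rw [← Finset.sum_attach t (fun k => (if h : k ∈ t then c ⟨k, h⟩ else 0) • v k)]
          exact Finset.sum_congr rfl fun k _ => by simp [k.2]
    rw [himg]
    have hker : LinearMap.ker (Fintype.linearCombination ℝ (fun k : t => v k)) = ⊥ := by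
      rw [LinearMap.ker_eq_bot']
      intro g hg
      rw [Fintype.linearCombination_apply] at hg
      funext k
      exact Fintype.linearIndependent_iff.mp hli g hg k
    have hemb := LinearMap.isClosedEmbedding_of_injective hker
    apply hemb.isClosedMap
    have : {c : t → ℝ | ∀ k, 0 ≤ c k} = ⋂ k : t, {c : t → ℝ | 0 ≤ c k} := by
      ext c; simp [Set.mem_iInter]
    rw [this]
    exact isClosed_iInter fun k => isClosed_le continuous_const (continuous_apply k)
  · have : {x : E | LinearIndependent ℝ (fun k : t => v k) ∧
        ∃ c : κ → ℝ, (∀ k, 0 ≤ c k) ∧ (∀ k ∉ t, c k = 0) ∧ ∑ k, c k • v k = x} = ∅ := by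
      ext x; simp [hli]
    rw [this]; exact isClosed_empty

end ConeClosed

open scoped InnerProductSpace in
lemma farkas_cone {κ : Type*} [Fintype κ] {E : Type*} [NormedAddCommGroup E]
    [InnerProductSpace ℝ E] [FiniteDimensional ℝ E] (v : κ → E) (b : E)
    (h : ∀ w : E, (∀ k, 0 ≤ ⟪v k, w⟫_ℝ) → 0 ≤ ⟪b, w⟫_ℝ) :
    ∃ c : κ → ℝ, (∀ k, 0 ≤ c k) ∧ ∑ k, c k • v k = b := by
  classical
  haveI : CompleteSpace E := FiniteDimensional.complete ℝ E
  set K : ConvexCone ℝ E :=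
    { carrier := {x : E | ∃ c : κ → ℝ, (∀ k, 0 ≤ c k) ∧ ∑ k, c k • v k = x}
      smul_mem' := by
        rintro a ha x ⟨c, h0, rfl⟩
        exact ⟨fun k => a * c k, fun k => mul_nonneg ha.le (h0 k), by
          rw [Finset.smul_sum]; exact Finset.sum_congr rfl fun k _ => (smul_smul a (c k) (v k)).symm ▸ rfl⟩
      add_mem' := by
        rintro x ⟨c, h0, rfl⟩ z ⟨c', h0', rfl⟩
        exact ⟨fun k => c k + c' k, fun k => add_nonneg (h0 k) (h0' k), by
          rw [← Finset.sum_add_distrib]; exact Finset.sum_congr rfl fun k _ => add_smul (c k) (c' k) (v k)⟩ } with hK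
  by_contra hb
  have hbK : b ∉ K := by
    intro hmem
    exact hb hmem
  obtain ⟨w, hw1, hw2⟩ : ∃ y, (∀ x ∈ K, 0 ≤ ⟪x, y⟫_ℝ) ∧ ⟪y, b⟫_ℝ < 0 := by
    obtain ⟨y, hy1, hy2⟩ := ProperCone.hyperplane_separation'
      (C := { toSubmodule := K.toPointedCone ⟨fun _ => 0, fun k => le_refl 0, by simp⟩
              isClosed' := isClosed_coneSet v }) (x₀ := b) hbK
    exact ⟨y, hy1, by rw [real_inner_comm]; exact hy2⟩
  have hvw : ∀ k, 0 ≤ ⟪v k, w⟫_ℝ := by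
    intro k
    apply hw1
    refine ⟨fun j => if j = k then 1 else 0, fun j => by positivity, ?_⟩
    simp [ite_smul]
  have := h w hvw
  rw [real_inner_comm] at hw2
  linarith

lemma eucl_sum_apply {ι : Type*} {κ : Type*} (s : Finset κ)
    (f : κ → EuclideanSpace ℝ ι) (x : ι) : (∑ k ∈ s, f k) x = ∑ k ∈ s, f k x := by
  classical
  induction s using Finset.cons_induction with
  | empty => rfl
  | cons a s ha ih => rw [Finset.sum_cons, Finset.sum_cons, PiLp.add_apply, ih]

namespace FarkasAux

variable {V : Type*} [Fintype V] [DecidableEq V]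

noncomputable def g : (Finset V × V × V) ⊕ (Finset V ⊕ V × V) →
    EuclideanSpace ℝ (Finset V ⊕ V × V)
  | Sum.inl (S, i, j) => if SepSet S i j then
      EuclideanSpace.single (Sum.inl S) (1:ℝ)
        + EuclideanSpace.single (Sum.inr (i, j)) (1:ℝ) else 0
  | Sum.inr (Sum.inl S) => -EuclideanSpace.single (Sum.inl S) (1:ℝ)
  | Sum.inr (Sum.inr p) => EuclideanSpace.single (Sum.inr p) (1:ℝ)

lemma g_inl_apply (S : Finset V) (i j : V) (x : Finset V ⊕ V × V) :
    g (Sum.inl (S, i, j)) x = if SepSet S i j then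
      ((if x = Sum.inl S then (1:ℝ) else 0) + (if x = Sum.inr (i, j) then (1:ℝ) else 0)) else 0 := by
  rw [g]
  rw [apply_ite (fun u : EuclideanSpace ℝ (Finset V ⊕ V × V) => u x)]
  rw [PiLp.add_apply, PiLp.zero_apply, EuclideanSpace.single_apply, EuclideanSpace.single_apply]

lemma g_inr_inl_apply (S : Finset V) (x : Finset V ⊕ V × V) :
    g (Sum.inr (Sum.inl S)) x = -(if x = Sum.inl S then (1:ℝ) else 0) := by
  rw [g, PiLp.neg_apply, EuclideanSpace.single_apply]

lemma g_inr_inr_apply (p : V × V) (x : Finset V ⊕ V × V) :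
    g (Sum.inr (Sum.inr p)) x = (if x = Sum.inr p then (1:ℝ) else 0) := by
  rw [g, EuclideanSpace.single_apply]

end FarkasAux

section Main

variable {V : Type*} [Fintype V] [DecidableEq V]

lemma maxSep_nonneg (α : Finset V → ℝ) (i j : V) : 0 ≤ maxSep α i j :=
  Finset.le_max' _ 0 (Finset.mem_insert_self _ _)

lemma le_maxSep {α : Finset V → ℝ} {S : Finset V} {i j : V} (h : SepSet S i j) :
    α S ≤ maxSep α i j :=
  Finset.le_max' _ _ (Finset.mem_insert_of_mem
    (Finset.mem_image_of_mem α (Finset.mem_filter.mpr ⟨Finset.mem_univ S, h⟩)))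

lemma maxSep_le {α : Finset V → ℝ} {i j : V} {b : ℝ} (h0 : 0 ≤ b)
    (h : ∀ S : Finset V, SepSet S i j → α S ≤ b) : maxSep α i j ≤ b := by
  apply Finset.max'_le
  intro a ha
  rcases Finset.mem_insert.mp ha with rfl | ha
  · exact h0
  · obtain ⟨S, hS, rfl⟩ := Finset.mem_image.mp ha
    exact h S (Finset.mem_filter.mp hS).2

lemma forward_dir (y : Finset V → ℝ)
    (π : V → V → ℝ) (hπ : ∀ i j, 0 ≤ π i j)
    (yp : Finset V → V → V → ℝ) (hnn : ∀ S i j, 0 ≤ yp S i j)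
    (hzero : ∀ S i j, ¬ SepSet S i j → yp S i j = 0)
    (hge : ∀ S : Finset V, y S ≤ ∑ i : V, ∑ j : V, yp S i j)
    (hle : ∀ i j : V, ∑ S : Finset V, yp S i j ≤ π i j)
    (α : Finset V → ℝ) (hα : ∀ S, 0 ≤ α S) :
    ∑ S : Finset V, α S * y S ≤ ∑ i : V, ∑ j : V, maxSep α i j * π i j := by
  calc ∑ S : Finset V, α S * y S
      ≤ ∑ S : Finset V, α S * ∑ i : V, ∑ j : V, yp S i j :=
        Finset.sum_le_sum fun S _ => mul_le_mul_of_nonneg_left (hge S) (hα S)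
    _ = ∑ i : V, ∑ j : V, ∑ S : Finset V, α S * yp S i j := by
        simp_rw [Finset.mul_sum]
        rw [Finset.sum_comm]
        exact Finset.sum_congr rfl fun i _ => Finset.sum_comm
    _ ≤ ∑ i : V, ∑ j : V, maxSep α i j * π i j := by
        refine Finset.sum_le_sum fun i _ => Finset.sum_le_sum fun j _ => ?_
        calc ∑ S : Finset V, α S * yp S i j
            ≤ ∑ S : Finset V, maxSep α i j * yp S i j := by
              refine Finset.sum_le_sum fun S _ => ?_
              by_cases hS : SepSet S i j
              · exact mul_le_mul_of_nonneg_right (le_maxSep hS) (hnn S i j)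
              · rw [hzero S i j hS, mul_zero, mul_zero]
          _ = maxSep α i j * ∑ S : Finset V, yp S i j := (Finset.mul_sum _ _ _).symm
          _ ≤ maxSep α i j * π i j :=
              mul_le_mul_of_nonneg_left (hle i j) (maxSep_nonneg α i j)


open scoped InnerProductSpace in
lemma backward_dir (y : Finset V → ℝ)
    (π : V → V → ℝ) (hπ : ∀ i j, 0 ≤ π i j)
    (h : ∀ α : Finset V → ℝ, (∀ S, 0 ≤ α S) →
      ∑ S : Finset V, α S * y S ≤ ∑ i : V, ∑ j : V, maxSep α i j * π i j) :
    ∃ yp : Finset V → V → V → ℝ,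
      (∀ S i j, 0 ≤ yp S i j) ∧
      (∀ S i j, ¬ SepSet S i j → yp S i j = 0) ∧
      (∀ S : Finset V, y S ≤ ∑ i : V, ∑ j : V, yp S i j) ∧
      (∀ i j : V, ∑ S : Finset V, yp S i j ≤ π i j) := by
  classical
  set b : EuclideanSpace ℝ (Finset V ⊕ V × V) :=
    (WithLp.equiv 2 _).symm (Sum.elim y (fun p => π p.1 p.2)) with hbdef
  have hbapp : ∀ x, b x = Sum.elim y (fun p => π p.1 p.2) x := by
    intro x; rw [hbdef]; rfl
  have hfar : ∀ w : EuclideanSpace ℝ (Finset V ⊕ V × V),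
      (∀ k, 0 ≤ ⟪FarkasAux.g k, w⟫_ℝ) → 0 ≤ ⟪b, w⟫_ℝ := by
    intro w hw
    -- extract the dual inequalities
    have hβ : ∀ p : V × V, 0 ≤ w (Sum.inr p) := by
      intro p
      have := hw (Sum.inr (Sum.inr p))
      rwa [FarkasAux.g, EuclideanSpace.inner_single_left, map_one, one_mul] at this
    have hα : ∀ S : Finset V, w (Sum.inl S) ≤ 0 := by
      intro S
      have := hw (Sum.inr (Sum.inl S))
      rw [FarkasAux.g, inner_neg_left, EuclideanSpace.inner_single_left, map_one, one_mul] at this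
      linarith
    have hedge : ∀ (S : Finset V) (i j : V), SepSet S i j →
        -(w (Sum.inl S)) ≤ w (Sum.inr (i, j)) := by
      intro S i j hS
      have := hw (Sum.inl (S, i, j))
      rw [FarkasAux.g, if_pos hS, inner_add_left, EuclideanSpace.inner_single_left,
        EuclideanSpace.inner_single_left, map_one, one_mul, one_mul] at this
      linarith
    have hmax : ∀ i j : V, maxSep (fun S => -(w (Sum.inl S))) i j ≤ w (Sum.inr (i, j)) := by
      intro i j
      exact maxSep_le (hβ (i, j)) (fun S hS => hedge S i j hS)
    have hkey := h (fun S => -(w (Sum.inl S))) (fun S => neg_nonneg.mpr (hα S))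
    have hkey2 : ∑ S : Finset V, (fun S => -(w (Sum.inl S))) S * y S ≤
        ∑ i : V, ∑ j : V, w (Sum.inr (i, j)) * π i j := by
      refine hkey.trans (Finset.sum_le_sum fun i _ => Finset.sum_le_sum fun j _ =>
        mul_le_mul_of_nonneg_right (hmax i j) (hπ i j))
    have hib : ⟪b, w⟫_ℝ =
        (∑ S : Finset V, y S * w (Sum.inl S)) + ∑ i : V, ∑ j : V, π i j * w (Sum.inr (i, j)) := by
      rw [PiLp.inner_apply]
      rw [Finset.sum_congr rfl fun (x : Finset V ⊕ V × V) (_ : x ∈ Finset.univ) =>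
        (by simp [RCLike.inner_apply, mul_comm] : ⟪b x, w x⟫_ℝ = b x * w x)]
      have e1 : ∑ S : Finset V, b (Sum.inl S) * w (Sum.inl S)
          = ∑ S : Finset V, y S * w (Sum.inl S) :=
        Finset.sum_congr rfl fun S _ => by rw [hbapp]; rfl
      have e2 : ∑ p : V × V, b (Sum.inr p) * w (Sum.inr p)
          = ∑ i : V, ∑ j : V, π i j * w (Sum.inr (i, j)) := by
        rw [Fintype.sum_prod_type]
        refine Finset.sum_congr rfl fun i _ => Finset.sum_congr rfl fun j _ => ?_
        rw [hbapp]; rfl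
      rw [Fintype.sum_sum_type, e1, e2]
    rw [hib]
    simp only [neg_mul] at hkey2
    have h1 : ∑ S : Finset V, y S * w (Sum.inl S) = -∑ S : Finset V, -(w (Sum.inl S) * y S) := by
      simp [mul_comm]
    have h2 : ∑ i : V, ∑ j : V, π i j * w (Sum.inr (i, j)) =
        ∑ i : V, ∑ j : V, w (Sum.inr (i, j)) * π i j := by
      exact Finset.sum_congr rfl fun i _ => Finset.sum_congr rfl fun j _ => mul_comm _ _
    rw [h1, h2]
    have := hkey2
    simp only [← neg_mul] at this
    linarith [this]
  obtain ⟨c, hc0, hcsum⟩ := farkas_cone FarkasAux.g b hfar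
  -- now extract yp
  have hco : ∀ x : Finset V ⊕ V × V, ∑ k, c k * FarkasAux.g k x = b x := by
    intro x
    have h1 := eucl_sum_apply Finset.univ (fun k => c k • FarkasAux.g k) x
    rw [hcsum] at h1
    rw [h1]
    exact Finset.sum_congr rfl fun k _ => by rw [PiLp.smul_apply, smul_eq_mul]
  refine ⟨fun S i j => if SepSet S i j then c (Sum.inl (S, i, j)) else 0, ?_, ?_, ?_, ?_⟩
  · intro S i j; by_cases hS : SepSet S i j <;> simp [hS, hc0]
  · intro S i j hS; simp [hS]
  · intro S
    have hx := hco (Sum.inl S)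
    rw [hbapp] at hx
    simp only [Sum.elim_inl] at hx
    rw [Fintype.sum_sum_type] at hx
    have T1 : ∑ q : Finset V × V × V, c (Sum.inl q) * FarkasAux.g (Sum.inl q) (Sum.inl S)
        = ∑ i : V, ∑ j : V, (if SepSet S i j then c (Sum.inl (S, i, j)) else 0) := by
      rw [Fintype.sum_prod_type]
      rw [Finset.sum_eq_single_of_mem S (Finset.mem_univ S)
        (fun S' _ hne => Finset.sum_eq_zero fun p _ => by
          obtain ⟨i, j⟩ := p
          rw [FarkasAux.g_inl_apply]
          simp [Ne.symm hne])]
      rw [Fintype.sum_prod_type]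
      refine Finset.sum_congr rfl fun i _ => Finset.sum_congr rfl fun j _ => ?_
      rw [FarkasAux.g_inl_apply]
      by_cases hS : SepSet S i j <;> simp [hS]
    have T2 : ∑ z : Finset V ⊕ V × V, c (Sum.inr z) * FarkasAux.g (Sum.inr z) (Sum.inl S)
        = -c (Sum.inr (Sum.inl S)) := by
      rw [Fintype.sum_sum_type]
      simp [FarkasAux.g_inr_inl_apply, FarkasAux.g_inr_inr_apply, mul_ite, Finset.sum_ite_eq]
    rw [T1, T2] at hx
    have := hc0 (Sum.inr (Sum.inl S))
    linarith
  · intro i j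
    have hx := hco (Sum.inr (i, j))
    rw [hbapp] at hx
    simp only [Sum.elim_inr] at hx
    rw [Fintype.sum_sum_type] at hx
    have T1 : ∑ q : Finset V × V × V, c (Sum.inl q) * FarkasAux.g (Sum.inl q) (Sum.inr (i, j))
        = ∑ S : Finset V, (if SepSet S i j then c (Sum.inl (S, i, j)) else 0) := by
      rw [Fintype.sum_prod_type]
      refine Finset.sum_congr rfl fun S _ => ?_
      rw [Fintype.sum_prod_type]
      rw [Finset.sum_eq_single_of_mem i (Finset.mem_univ i)
        (fun i' _ hne => Finset.sum_eq_zero fun j' _ => by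
          rw [FarkasAux.g_inl_apply]
          simp [Ne.symm hne])]
      rw [Finset.sum_eq_single_of_mem j (Finset.mem_univ j)
        (fun j' _ hne => by
          rw [FarkasAux.g_inl_apply]
          simp [Ne.symm hne])]
      rw [FarkasAux.g_inl_apply]
      by_cases hS : SepSet S i j <;> simp [hS]
    have T2 : ∑ z : Finset V ⊕ V × V, c (Sum.inr z) * FarkasAux.g (Sum.inr z) (Sum.inr (i, j))
        = c (Sum.inr (Sum.inr (i, j))) := by
      rw [Fintype.sum_sum_type]
      simp [FarkasAux.g_inr_inl_apply, FarkasAux.g_inr_inr_apply, mul_ite, Finset.sum_ite_eq]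
    rw [T1, T2] at hx
    have := hc0 (Sum.inr (Sum.inr (i, j)))
    linarith

end Main


/-- Farkas: given `y_S ≥ 0` and penalties `π_{ij} ≥ 0`, there exist
nonnegative `y_{S,ij}` (supported where `S` separates `(i,j)`) with
`∑_{(i,j) : S⊙(i,j)} y_{S,ij} ≥ y_S` for all `S` and `∑_{S : S⊙(i,j)} y_{S,ij} ≤ π_{ij}`
for all pairs, if and only if for every `α : 2^V → ℝ≥0` one has
`∑_S α_S y_S ≤ ∑_{(i,j)} (max_{S : S⊙(i,j)} α_S) π_{ij}`. -/


theorem farkas_characterization_of_feasibility {V : Type*} [Fintype V] [DecidableEq V]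
    (y : Finset V → ℝ) (hy : ∀ S, 0 ≤ y S)
    (π : V → V → ℝ) (hπ : ∀ i j, 0 ≤ π i j) (hsymm : ∀ i j, π i j = π j i) :
    (∃ yp : Finset V → V → V → ℝ,
      (∀ S i j, 0 ≤ yp S i j) ∧
      (∀ S i j, ¬ SepSet S i j → yp S i j = 0) ∧
      (∀ S : Finset V, y S ≤ ∑ i : V, ∑ j : V, yp S i j) ∧
      (∀ i j : V, ∑ S : Finset V, yp S i j ≤ π i j)) ↔
    (∀ α : Finset V → ℝ, (∀ S, 0 ≤ α S) →
      ∑ S : Finset V, α S * y S ≤ ∑ i : V, ∑ j : V, maxSep α i j * π i j) := by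
  constructor
  · rintro ⟨yp, h1, h2, h3, h4⟩ α hα
    exact forward_dir y π hπ yp h1 h2 h3 h4 α hα
  · intro hcond
    exact backward_dir y π hπ hcond
end

section
/- If x is a feasible fractional solution to the per-vertex-penalty LP (∑_{v∈Γ(S)} x_v + y_u ≥ 1 for all S ⊆ V∖{r}, u ∈ S), and Q = {u : y_u ≤ α} for some α ∈ (0,1), then x' = x/(1-α) is feasible to the Steiner tree covering LP with terminal set Q, i.e., ∑_{v∈Γ(S)} x'_v ≥ 1 for all S ⊆ V∖{r} with S ∩ Q ≠ ∅. -/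
open Finset

/-- The outer vertex boundary `Γ(S)` of a set `S`. -/
def vGamma {V : Type*} [Fintype V] [DecidableEq V] (G : SimpleGraph V)
    [DecidableRel G.Adj] (S : Finset V) : Finset V :=
  (Finset.univ \ S).filter (fun v => ∃ u ∈ S, G.Adj u v)

/-- if `(x, y)` is feasible to the per-vertex-penalty LP
(`∑_{v ∈ Γ(S)} x_v + y_u ≥ 1` for all `S ⊆ V∖{r}`, `u ∈ S`) and
`Q = {u : y_u ≤ α}` for a threshold `α ∈ (0,1)`, then `x' = x/(1-α)` is feasible to
the Steiner tree covering LP with terminal set `Q`: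
`∑_{v ∈ Γ(S)} x'_v ≥ 1` for every `S ⊆ V∖{r}` meeting `Q`. -/
theorem threshold_rounding_feasibility {V : Type*} [Fintype V] [DecidableEq V]
    (G : SimpleGraph V) [DecidableRel G.Adj] (r : V)
    (x y : V → ℝ) (hx : ∀ v, 0 ≤ x v) (hy : ∀ u, 0 ≤ y u)
    (α : ℝ) (hα0 : 0 < α) (hα1 : α < 1)
    (hfeas : ∀ S : Finset V, r ∉ S → ∀ u ∈ S, (∑ v ∈ vGamma G S, x v) + y u ≥ 1) :
    ∀ S : Finset V, r ∉ S → (∃ u ∈ S, y u ≤ α) →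
      (∑ v ∈ vGamma G S, x v / (1 - α)) ≥ 1 := by
  intro S hr ⟨u, huS, huα⟩
  have h1 : (1 : ℝ) - α ≤ ∑ v ∈ vGamma G S, x v := by
    have := hfeas S hr u huS; linarith
  have hpos : (0 : ℝ) < 1 - α := by linarith
  rw [← Finset.sum_div, ge_iff_le, le_div_iff₀ hpos, one_mul]
  exact h1
end
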